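/- Under the linear model, the expected number of answer sets of size k (0 < k < n) equals C(n,k) · q^{(n-k)(n-k-1)} · (1 - q^{n-k})^k · (1-d)^{n-k}, where q = 1 - c₁/n and d = c₂/n, and the total expected number of answer sets equals the sum of these quantities over k = 1, …, n-1. -/

import Mathlib

open MeasureTheory ProbabilityTheory MeasurableSpace
open scoped ENNReal

section Aux

variable {A : Type*} [Fintype A] [DecidableEq A]
  {Ω : Type*} [MeasurableSpace Ω] {μ : Measure Ω} [IsProbabilityMeasure μ]
  {E : A × A → Set Ω}

/-- grouping: events measurable w.r.t. disjoint first-coordinate blocks multiply. -/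
lemma meas_biInter_blocks (hmeas : ∀ r, MeasurableSet (E r)) (hindep : iIndepSet E μ)
    (F : A → Set Ω)
    (hF : ∀ a, MeasurableSet[⨆ r ∈ {r : A × A | r.1 = a}, generateFrom {E r}] (F a))
    (t : Finset A) :
    μ (⋂ a ∈ t, F a) = ∏ a ∈ t, μ (F a) := by
  classical
  induction t using Finset.induction_on with
  | empty => simp
  | insert a t ha ih =>
    have h_le : ∀ r : A × A, generateFrom {E r} ≤ ‹MeasurableSpace Ω› := fun r =>
      generateFrom_le (by rintro s rfl; exact hmeas r)
    have hI : Indep (⨆ r ∈ {r : A × A | r.1 = a}, generateFrom {E r})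
        (⨆ r ∈ {r : A × A | r.1 ∈ (t : Set A)}, generateFrom {E r}) μ := by
      refine indep_iSup_of_disjoint h_le ((iIndepSet_iff_iIndep E μ).1 hindep) ?_
      rw [Set.disjoint_left]
      rintro ⟨x, y⟩ hx hy
      simp only [Set.mem_setOf_eq] at hx hy
      exact ha (hx ▸ hy)
    have hT : MeasurableSet[⨆ r ∈ {r : A × A | r.1 ∈ (t : Set A)}, generateFrom {E r}]
        (⋂ a' ∈ t, F a') := by
      refine MeasurableSet.biInter t.countable_toSet (fun a' ha' => ?_)
      have hle : (⨆ r ∈ {r : A × A | r.1 = a'}, generateFrom {E r}) ≤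
          ⨆ r ∈ {r : A × A | r.1 ∈ (t : Set A)}, generateFrom {E r} := by
        refine iSup_le fun r => iSup_le fun hr => ?_
        exact le_iSup₂ (f := fun (r : A × A) (_ : r ∈ {r : A × A | r.1 ∈ (t : Set A)}) =>
          generateFrom {E r}) r (show r.1 ∈ (t : Set A) by rw [hr]; exact Finset.mem_coe.2 ha')
      exact hle _ (hF a')
    rw [Finset.set_biInter_insert, Finset.prod_insert ha, ← ih]
    exact (Indep_iff _ _ _).1 hI _ _ (hF a) hT

/-- probability of intersection of complements over one row. -/
lemma meas_biInter_compl (hmeas : ∀ r, MeasurableSet (E r)) (hindep : iIndepSet E μ)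
    (a : A) (t : Finset A) :
    μ (⋂ b ∈ t, (E (a, b))ᶜ) = ∏ b ∈ t, (1 - μ (E (a, b))) := by
  classical
  have h := ((iIndepSet_iff_iIndep E μ).1 hindep).meas_biInter
    (S := t.image (fun b => (a, b))) (s := fun r => (E r)ᶜ)
    (fun r _ => (measurableSet_generateFrom (show E r ∈ {E r} from rfl)).compl)
  rw [Finset.set_biInter_finset_image] at h
  rw [h, Finset.prod_image (fun x _ y _ h => (Prod.mk.injEq a x a y ▸ h).2)]
  exact Finset.prod_congr rfl fun b _ => prob_compl_eq_one_sub (hmeas (a, b))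

end Aux

section Aux2

variable {A : Type*} [Fintype A] [DecidableEq A]
  {Ω : Type*} [MeasurableSpace Ω] {μ : Measure Ω} [IsProbabilityMeasure μ]
  {E : A × A → Set Ω}

/-- The answer-set event for a fixed `S`, written as an intersection of row events. -/
lemma event_eq (E : A × A → Set Ω) (S : Finset A) :
    {ω | (S : Set A) = {a | ∃ b, b ∉ S ∧ ω ∈ E (a, b)}} =
      ⋂ a ∈ (Finset.univ : Finset A),
        (if a ∈ S then ⋃ b ∈ Sᶜ, E (a, b) else ⋂ b ∈ Sᶜ, (E (a, b))ᶜ) := by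
  ext ω
  simp only [Set.mem_setOf_eq, Set.ext_iff, Set.mem_iInter, Finset.mem_univ, forall_const,
    Finset.mem_coe]
  refine forall_congr' fun a => ?_
  by_cases ha : a ∈ S
  · simp [ha]
  · simp only [ha, if_neg, not_false_iff, Set.mem_iInter, Finset.mem_compl, Set.mem_compl_iff,
      false_iff, not_exists, not_and]

lemma prob_event (hmeas : ∀ r, MeasurableSet (E r)) (hindep : iIndepSet E μ)
    (c₁ c₂ : ℝ) (hc₁ : 0 ≤ c₁) (hc₂ : 0 ≤ c₂)
    (n : ℕ) (hn : n = Fintype.card A) (hn0 : 0 < n)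
    (hc₁n : c₁ ≤ n) (hc₂n : c₂ ≤ n)
    (hp : ∀ a b : A, a ≠ b → μ (E (a, b)) = ENNReal.ofReal (c₁ / n))
    (hd : ∀ a : A, μ (E (a, a)) = ENNReal.ofReal (c₂ / n))
    (S : Finset A) (k : ℕ) (hk : S.card = k) :
    μ {ω | (S : Set A) = {a | ∃ b, b ∉ S ∧ ω ∈ E (a, b)}} =
      ENNReal.ofReal ((1 - c₁ / n) ^ ((n - k) * (n - k - 1)) *
        ((1 - (1 - c₁ / n) ^ (n - k)) ^ k * (1 - c₂ / n) ^ (n - k))) := by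
  classical
  set q : ℝ := 1 - c₁ / n with hqdef
  set d : ℝ := c₂ / n with hddef
  have hnR : (0:ℝ) < n := by exact_mod_cast hn0
  have hq0 : 0 ≤ q := by
    have : c₁ / n ≤ 1 := by rw [div_le_one hnR]; exact hc₁n
    simp only [hqdef]; linarith
  have hq1 : q ≤ 1 := by
    have : 0 ≤ c₁ / n := div_nonneg hc₁ hnR.le
    simp only [hqdef]; linarith
  have hd0 : 0 ≤ 1 - d := by
    have : c₂ / n ≤ 1 := by rw [div_le_one hnR]; exact hc₂n
    simp only [hddef]; linarith
  -- row events
  set F : A → Set Ω := fun a =>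
    if a ∈ S then ⋃ b ∈ Sᶜ, E (a, b) else ⋂ b ∈ Sᶜ, (E (a, b))ᶜ with hFdef
  have hcard : Sᶜ.card = n - k := by
    rw [Finset.card_compl, hk, hn]
  -- measurability of rows w.r.t. block σ-algebras
  have hEblock : ∀ a b : A,
      MeasurableSet[⨆ r ∈ {r : A × A | r.1 = a}, generateFrom {E r}] (E (a, b)) := by
    intro a b
    have : generateFrom {E (a, b)} ≤ ⨆ r ∈ {r : A × A | r.1 = a}, generateFrom {E r} :=
      le_iSup₂ (f := fun (r : A × A) (_ : r ∈ {r : A × A | r.1 = a}) => generateFrom {E r})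
        (a, b) rfl
    exact this _ (measurableSet_generateFrom (show E (a, b) ∈ {E (a, b)} from rfl))
  have hFblock : ∀ a, MeasurableSet[⨆ r ∈ {r : A × A | r.1 = a}, generateFrom {E r}] (F a) := by
    intro a
    by_cases ha : a ∈ S <;> simp only [hFdef, ha, if_pos, if_neg, not_false_iff]
    · exact MeasurableSet.biUnion (Sᶜ).countable_toSet fun b _ => hEblock a b
    · exact MeasurableSet.biInter (Sᶜ).countable_toSet fun b _ => (hEblock a b).compl
  have hmain := meas_biInter_blocks hmeas hindep F hFblock Finset.univ
  rw [event_eq E S]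
  rw [show (⋂ a ∈ (Finset.univ : Finset A),
      (if a ∈ S then ⋃ b ∈ Sᶜ, E (a, b) else ⋂ b ∈ Sᶜ, (E (a, b))ᶜ)) = ⋂ a ∈ Finset.univ, F a
    from rfl, hmain]
  -- compute each row probability
  have hrow_in : ∀ a ∈ S, μ (F a) = ENNReal.ofReal (1 - q ^ (n - k)) := by
    intro a ha
    have hFa : F a = (⋂ b ∈ Sᶜ, (E (a, b))ᶜ)ᶜ := by
      simp [hFdef, ha, Set.compl_iInter]
    have hmeasI : MeasurableSet (⋂ b ∈ Sᶜ, (E (a, b))ᶜ) :=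
      MeasurableSet.biInter (Sᶜ).countable_toSet fun b _ => (hmeas _).compl
    rw [hFa, prob_compl_eq_one_sub hmeasI, meas_biInter_compl hmeas hindep]
    have : ∀ b ∈ Sᶜ, (1 : ℝ≥0∞) - μ (E (a, b)) = ENNReal.ofReal q := by
      intro b hb
      have hab : a ≠ b := fun h => (Finset.mem_compl.1 hb) (h ▸ ha)
      rw [hp a b hab, hqdef, ENNReal.ofReal_sub _ (div_nonneg hc₁ hnR.le), ENNReal.ofReal_one]
    rw [Finset.prod_congr rfl this, Finset.prod_const, hcard, ← ENNReal.ofReal_pow hq0,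
      ← ENNReal.ofReal_one, ← ENNReal.ofReal_sub]
    exact pow_nonneg hq0 _
  have hrow_out : ∀ a ∈ Sᶜ, μ (F a) = ENNReal.ofReal ((1 - d) * q ^ (n - k - 1)) := by
    intro a ha
    have haS : a ∉ S := Finset.mem_compl.1 ha
    have hFa : F a = ⋂ b ∈ Sᶜ, (E (a, b))ᶜ := by simp [hFdef, haS]
    rw [hFa, meas_biInter_compl hmeas hindep, ← Finset.mul_prod_erase _ _ ha]
    have h1 : (1 : ℝ≥0∞) - μ (E (a, a)) = ENNReal.ofReal (1 - d) := by
      rw [hd a, hddef, ENNReal.ofReal_sub _ (div_nonneg hc₂ hnR.le), ENNReal.ofReal_one]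
    have h2 : ∀ b ∈ Sᶜ.erase a, (1 : ℝ≥0∞) - μ (E (a, b)) = ENNReal.ofReal q := by
      intro b hb
      have hab : a ≠ b := fun h => (Finset.mem_erase.1 hb).1 h.symm
      rw [hp a b hab, hqdef, ENNReal.ofReal_sub _ (div_nonneg hc₁ hnR.le), ENNReal.ofReal_one]
    rw [h1, Finset.prod_congr rfl h2, Finset.prod_const, Finset.card_erase_of_mem ha, hcard,
      ← ENNReal.ofReal_pow hq0, ← ENNReal.ofReal_mul hd0]
  -- combine
  rw [← Finset.prod_mul_prod_compl S (fun a => μ (F a)),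
    Finset.prod_congr rfl hrow_in, Finset.prod_congr rfl hrow_out,
    Finset.prod_const, Finset.prod_const, hk, hcard]
  rw [← ENNReal.ofReal_pow (by nlinarith [pow_le_one₀ hq0 hq1 (n := n - k)] : (0:ℝ) ≤ 1 - q ^ (n - k)),
    ← ENNReal.ofReal_pow (mul_nonneg hd0 (pow_nonneg hq0 _)),
    ← ENNReal.ofReal_mul (pow_nonneg (by nlinarith [pow_le_one₀ hq0 hq1 (n := n - k)]) _)]
  congr 1
  rw [mul_pow, ← pow_mul]
  ring
end Aux2

section Aux3

variable {A : Type*} [Fintype A] [DecidableEq A]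
  {Ω : Type*} [MeasurableSpace Ω] {μ : Measure Ω} [IsProbabilityMeasure μ]
  {E : A × A → Set Ω}

lemma measurable_event (hmeas : ∀ r, MeasurableSet (E r)) (S : Finset A) :
    MeasurableSet {ω | (S : Set A) = {a | ∃ b, b ∉ S ∧ ω ∈ E (a, b)}} := by
  rw [event_eq E S]
  refine MeasurableSet.biInter (Finset.univ : Finset A).countable_toSet fun a _ => ?_
  split
  · exact MeasurableSet.biUnion (Sᶜ).countable_toSet fun b _ => hmeas _
  · exact MeasurableSet.biInter (Sᶜ).countable_toSet fun b _ => (hmeas _).compl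

lemma integral_ncard (hmeas : ∀ r, MeasurableSet (E r))
    (P : Finset A → Prop) [DecidablePred P] :
    ∫ ω, ((Set.ncard {S : Finset A | P S ∧
        (S : Set A) = {a | ∃ b, b ∉ S ∧ ω ∈ E (a, b)}} : ℝ)) ∂μ =
      ∑ S ∈ Finset.univ.filter P,
        (μ {ω | (S : Set A) = {a | ∃ b, b ∉ S ∧ ω ∈ E (a, b)}}).toReal := by
  classical
  have hfun : ∀ ω : Ω, ((Set.ncard {S : Finset A | P S ∧
      (S : Set A) = {a | ∃ b, b ∉ S ∧ ω ∈ E (a, b)}} : ℝ)) =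
      ∑ S ∈ Finset.univ.filter P,
        Set.indicator {ω' | (S : Set A) = {a | ∃ b, b ∉ S ∧ ω' ∈ E (a, b)}}
          (fun _ => (1 : ℝ)) ω := by
    intro ω
    rw [show {S : Finset A | P S ∧ (S : Set A) = {a | ∃ b, b ∉ S ∧ ω ∈ E (a, b)}} =
        ↑(Finset.univ.filter (fun S : Finset A => P S ∧
          (S : Set A) = {a | ∃ b, b ∉ S ∧ ω ∈ E (a, b)})) by ext S; simp]
    rw [Set.ncard_coe_finset, ← Finset.filter_filter, Finset.card_filter]
    push_cast
    refine Finset.sum_congr rfl fun S _ => ?_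
    by_cases h : (S : Set A) = {a | ∃ b, b ∉ S ∧ ω ∈ E (a, b)} <;>
      simp [Set.indicator, h]
  simp only [hfun]
  rw [integral_finset_sum _ (fun S _ => (integrable_const (1 : ℝ)).indicator
    (measurable_event hmeas S))]
  refine Finset.sum_congr rfl fun S _ => ?_
  rw [integral_indicator_const _ (measurable_event hmeas S)]
  simp
  rfl

end Aux3

theorem expected_number_of_answer_sets {A : Type*} [Fintype A] [DecidableEq A]
    {Ω : Type*} [MeasurableSpace Ω] (μ : Measure Ω) [IsProbabilityMeasure μ]
    (E : A × A → Set Ω) (hmeas : ∀ r, MeasurableSet (E r))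
    (hindep : iIndepSet E μ)
    (c₁ c₂ : ℝ) (hc₁ : 0 ≤ c₁) (hc₂ : 0 ≤ c₂) (hc : 0 < c₁ + c₂)
    (n : ℕ) (hn : n = Fintype.card A) (hnc : (max c₁ c₂ : ℝ) < n)
    (hp : ∀ a b : A, a ≠ b → μ (E (a, b)) = ENNReal.ofReal (c₁ / n))
    (hd : ∀ a : A, μ (E (a, a)) = ENNReal.ofReal (c₂ / n)) :
    (∀ k : ℕ, 0 < k → k < n →
      ∫ ω, ((Set.ncard {S : Finset A | S.card = k ∧
          (S : Set A) = {a | ∃ b, b ∉ S ∧ ω ∈ E (a, b)}} : ℝ)) ∂μ =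
        (n.choose k : ℝ) * ((1 - c₁ / n) ^ ((n - k) * (n - k - 1)) *
          (1 - (1 - c₁ / n) ^ (n - k)) ^ k * (1 - c₂ / n) ^ (n - k))) ∧
    ∫ ω, ((Set.ncard {S : Finset A | 0 < S.card ∧ S.card < n ∧
          (S : Set A) = {a | ∃ b, b ∉ S ∧ ω ∈ E (a, b)}} : ℝ)) ∂μ =
      ∑ k ∈ Finset.Ioo 0 n, (n.choose k : ℝ) *
        ((1 - c₁ / n) ^ ((n - k) * (n - k - 1)) *
          (1 - (1 - c₁ / n) ^ (n - k)) ^ k * (1 - c₂ / n) ^ (n - k)) := by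
  classical
  have hmax0 : (0:ℝ) < max c₁ c₂ := by
    rcases lt_or_ge 0 c₁ with h | h
    · exact lt_of_lt_of_le h (le_max_left _ _)
    · exact lt_of_lt_of_le (by linarith) (le_max_right _ _)
  have hnR0 : (0:ℝ) < n := hmax0.trans hnc
  have hn0 : 0 < n := by exact_mod_cast hnR0
  have hc₁n : c₁ ≤ n := ((le_max_left c₁ c₂).trans hnc.le)
  have hc₂n : c₂ ≤ n := ((le_max_right c₁ c₂).trans hnc.le)
  have hq0 : 0 ≤ 1 - c₁ / n := by
    have : c₁ / n ≤ 1 := by rw [div_le_one hnR0]; exact hc₁n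
    linarith
  have hq1 : 1 - c₁ / n ≤ 1 := by
    have : 0 ≤ c₁ / n := div_nonneg hc₁ hnR0.le
    linarith
  have hd0 : 0 ≤ 1 - c₂ / n := by
    have : c₂ / n ≤ 1 := by rw [div_le_one hnR0]; exact hc₂n
    linarith
  set V : ℕ → ℝ := fun k => (1 - c₁ / n) ^ ((n - k) * (n - k - 1)) *
      ((1 - (1 - c₁ / n) ^ (n - k)) ^ k * (1 - c₂ / n) ^ (n - k)) with hVdef
  have hV0 : ∀ k, 0 ≤ V k := by
    intro k
    have h1 : 0 ≤ 1 - (1 - c₁ / n) ^ (n - k) := by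
      have := pow_le_one₀ hq0 hq1 (n := n - k); linarith
    exact mul_nonneg (pow_nonneg hq0 _)
      (mul_nonneg (pow_nonneg h1 _) (pow_nonneg hd0 _))
  -- sum over sets of fixed cardinality
  have hsum : ∀ k : ℕ,
      ∑ S ∈ Finset.univ.filter (fun S : Finset A => S.card = k),
        (μ {ω | (S : Set A) = {a | ∃ b, b ∉ S ∧ ω ∈ E (a, b)}}).toReal =
      (n.choose k : ℝ) * V k := by
    intro k
    have hterm : ∀ S ∈ Finset.univ.filter (fun S : Finset A => S.card = k),
        (μ {ω | (S : Set A) = {a | ∃ b, b ∉ S ∧ ω ∈ E (a, b)}}).toReal = V k := by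
      intro S hS
      rw [prob_event hmeas hindep c₁ c₂ hc₁ hc₂ n hn hn0 hc₁n hc₂n hp hd S k
        (Finset.mem_filter.1 hS).2, ENNReal.toReal_ofReal (hV0 k)]
    rw [Finset.sum_congr rfl hterm, Finset.sum_const, nsmul_eq_mul]
    congr 2
    rw [show Finset.univ.filter (fun S : Finset A => S.card = k) =
        Finset.powersetCard k Finset.univ by
      rw [Finset.powersetCard_eq_filter, Finset.powerset_univ]]
    rw [Finset.card_powersetCard, Finset.card_univ, ← hn]
  constructor
  · intro k hk0 hkn
    rw [integral_ncard hmeas (fun S : Finset A => S.card = k), hsum k, hVdef]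
    ring
  · have hassoc : (fun ω => ((Set.ncard {S : Finset A | 0 < S.card ∧ S.card < n ∧
        (S : Set A) = {a | ∃ b, b ∉ S ∧ ω ∈ E (a, b)}} : ℝ))) =
        fun ω => ((Set.ncard {S : Finset A | (0 < S.card ∧ S.card < n) ∧
        (S : Set A) = {a | ∃ b, b ∉ S ∧ ω ∈ E (a, b)}} : ℝ)) := by
      funext ω
      have : {S : Finset A | 0 < S.card ∧ S.card < n ∧
          (S : Set A) = {a | ∃ b, b ∉ S ∧ ω ∈ E (a, b)}} =
          {S : Finset A | (0 < S.card ∧ S.card < n) ∧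
          (S : Set A) = {a | ∃ b, b ∉ S ∧ ω ∈ E (a, b)}} := by
        ext S; simp [and_assoc]
      rw [this]
    rw [hassoc, integral_ncard hmeas (fun S : Finset A => 0 < S.card ∧ S.card < n)]
    rw [← Finset.sum_fiberwise_of_maps_to (g := Finset.card)
      (fun S hS => by
        have := Finset.mem_filter.1 hS
        exact Finset.mem_Ioo.2 ⟨this.2.1, this.2.2⟩)]
    refine Finset.sum_congr rfl fun k hk => ?_
    have hk' := Finset.mem_Ioo.1 hk
    have hfe : (Finset.univ.filter (fun S : Finset A => 0 < S.card ∧ S.card < n)).filter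
        (fun S => S.card = k) = Finset.univ.filter (fun S : Finset A => S.card = k) := by
      ext S
      simp only [Finset.mem_filter, Finset.mem_univ, true_and]
      exact ⟨fun h => h.2, fun h => ⟨⟨h ▸ hk'.1, h ▸ hk'.2⟩, h⟩⟩
    rw [hfe, hsum k, hVdef]
    ring
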